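/- For every positive integer n, the number of 3-core partitions of n equals the number of 3-core partitions of 4n+1. Explicitly, identifying 3-cores of n with integer pairs (x,y) ∈ ℤ² satisfying 3x² + 3y² + 3xy + x + 2y = n, the map (x,y) ↦ (−2x, −2y−1) is a bijection from the solution set for n to the solution set for 4n+1. -/
import Mathlib


/-- For every positive integer `n`, the number of 3-core
partitions of `n` equals the number of 3-core partitions of `4n+1`;
identifying 3-cores of `n` with pairs `(x, y) ∈ ℤ²` satisfying
`3x² + 3y² + 3xy + x + 2y = n`, the map `(x, y) ↦ (-2x, -2y-1)` is a bijection
between the solution sets for `n` and for `4n+1`. -/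
theorem threecores_of_n_and_4n1 (n : ℕ) (hn : 0 < n) :
    Set.BijOn (fun q : ℤ × ℤ => (-2 * q.1, -2 * q.2 - 1))
      {q : ℤ × ℤ | 3 * q.1 ^ 2 + 3 * q.2 ^ 2 + 3 * q.1 * q.2 + q.1 + 2 * q.2 = n}
      {q : ℤ × ℤ | 3 * q.1 ^ 2 + 3 * q.2 ^ 2 + 3 * q.1 * q.2 + q.1 + 2 * q.2
        = 4 * n + 1}
    ∧ Nat.card {q : ℤ × ℤ //
          3 * q.1 ^ 2 + 3 * q.2 ^ 2 + 3 * q.1 * q.2 + q.1 + 2 * q.2 = n}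
      = Nat.card {q : ℤ × ℤ //
          3 * q.1 ^ 2 + 3 * q.2 ^ 2 + 3 * q.1 * q.2 + q.1 + 2 * q.2 = 4 * n + 1} := by
  have hbij : Set.BijOn (fun q : ℤ × ℤ => (-2 * q.1, -2 * q.2 - 1))
      {q : ℤ × ℤ | 3 * q.1 ^ 2 + 3 * q.2 ^ 2 + 3 * q.1 * q.2 + q.1 + 2 * q.2 = n}
      {q : ℤ × ℤ | 3 * q.1 ^ 2 + 3 * q.2 ^ 2 + 3 * q.1 * q.2 + q.1 + 2 * q.2
        = 4 * n + 1} := by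
    refine ⟨?_, ?_, ?_⟩
    · rintro ⟨x, y⟩ hq
      simp only [Set.mem_setOf_eq] at hq ⊢
      linear_combination 4 * hq
    · rintro ⟨x1, y1⟩ h1 ⟨x2, y2⟩ h2 heq
      simp only [Prod.mk.injEq] at heq
      obtain ⟨e1, e2⟩ := heq
      have : x1 = x2 := by omega
      have : y1 = y2 := by omega
      simp_all
    · rintro ⟨a, b⟩ hab
      simp only [Set.mem_setOf_eq] at hab
      rcases Int.even_or_odd a with ⟨s, hs⟩ | ⟨s, hs⟩ <;>
        rcases Int.even_or_odd b with ⟨t, ht⟩ | ⟨t, ht⟩ <;> subst hs ht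
      · -- a even, b even: LHS even, contradiction
        exfalso
        obtain ⟨c, hc⟩ : Even (4 * (n : ℤ) + 1) :=
          hab ▸ ⟨6 * s ^ 2 + 6 * t ^ 2 + 6 * s * t + s + 2 * t, by ring⟩
        omega
      · -- a even, b odd: the good case
        refine ⟨(-s, -t - 1), ?_, ?_⟩
        · show 3 * (-s) ^ 2 + 3 * (-t - 1) ^ 2 + 3 * (-s) * (-t - 1) + (-s) + 2 * (-t - 1)
            = (n : ℤ)
          have h4 : (4 : ℤ) * (3 * (-s) ^ 2 + 3 * (-t - 1) ^ 2 + 3 * (-s) * (-t - 1)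
              + (-s) + 2 * (-t - 1)) = 4 * n := by linear_combination hab
          linarith
        · simp only [Prod.mk.injEq]
          constructor <;> ring
      · exfalso
        obtain ⟨c, hc⟩ : Even (4 * (n : ℤ) + 1) :=
          hab ▸ ⟨6 * s ^ 2 + 6 * t ^ 2 + 6 * s * t + 7 * s + 5 * t + 2, by ring⟩
        omega
      · exfalso
        obtain ⟨c, hc⟩ : Even (4 * (n : ℤ) + 1) :=
          hab ▸ ⟨6 * s ^ 2 + 6 * t ^ 2 + 6 * s * t + 10 * s + 11 * t + 6, by ring⟩
        omega
  exact ⟨hbij, Nat.card_congr (Set.BijOn.equiv _ hbij)⟩
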